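/- Fix a finite index set ι and for each i ∈ ι a finite nonempty type α i, and consider SPNs over ι as defined inductively (Leaf, Sum with convex weights, Prod over disjoint scopes), with D(S) the product, over all Sum nodes occurring in S, of the number of children of that node. Then for every SPN S there exists a configuration x̃ : ∀ i, α i such that S(x̃) · D(S) ≥ max over configurations x of S(x). -/

import Mathlib

open scoped NNReal

/-- Sum-product networks over index set `ι` with variable domains `α i`, indexed by scope. -/
inductive SPN (ι : Type) (α : ι → Type) : Set ι → Type where
  | leaf (i : ι) (p : α i → ℝ≥0) : SPN ι α {i}
  | sum {sc : Set ι} (t : ℕ) (ht : 1 ≤ t) (child : Fin t → SPN ι α sc)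
      (w : Fin t → ℝ≥0) (hw : ∑ j, w j = 1) : SPN ι α sc
  | prod (t : ℕ) (scs : Fin t → Set ι)
      (hd : Pairwise fun j k => Disjoint (scs j) (scs k))
      (child : ∀ j, SPN ι α (scs j)) : SPN ι α (⋃ j, scs j)

/-- The value of an SPN at a configuration. -/
noncomputable def SPN.eval {ι : Type} {α : ι → Type} :
    {sc : Set ι} → SPN ι α sc → (∀ i, α i) → ℝ≥0
  | _, .leaf i p, x => p (x i)
  | _, .sum _ _ child w _, x => ∑ j, w j * (child j).eval x
  | _, .prod _ _ _ child, x => ∏ j, (child j).eval x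

/-- The upward pass of the max-product algorithm. -/
noncomputable def SPN.pd {ι : Type} {α : ι → Type} :
    {sc : Set ι} → SPN ι α sc → ℝ≥0
  | _, .leaf _ p => ⨆ v, p v
  | _, .sum _ _ child w _ => ⨆ j, w j * (child j).pd
  | _, .prod _ _ _ child => ∏ j, (child j).pd

/-- The product over all sum nodes of the number of their children. -/
def SPN.D {ι : Type} {α : ι → Type} :
    {sc : Set ι} → SPN ι α sc → ℕ
  | _, .leaf _ _ => 1
  | _, .sum t _ child _ _ => t * ∏ j, (child j).D
  | _, .prod _ _ _ child => ∏ j, (child j).D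

lemma SPN.one_le_D {ι : Type} {α : ι → Type} :
    ∀ {sc : Set ι} (S : SPN ι α sc), 1 ≤ S.D := by
  intro sc S
  induction S with
  | leaf i p => simp [SPN.D]
  | sum t ht child w hw ih =>
    simp only [SPN.D]
    exact Nat.mul_pos ht (Finset.prod_pos fun j _ => ih j)
  | prod t scs hd child ih =>
    simp only [SPN.D]
    exact Finset.one_le_prod' fun j _ => ih j

lemma SPN.eval_congr {ι : Type} {α : ι → Type} :
    ∀ {sc : Set ι} (S : SPN ι α sc) (x y : ∀ i, α i),
      (∀ i ∈ sc, x i = y i) → S.eval x = S.eval y := by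
  intro sc S
  induction S with
  | leaf i p => intro x y h; simp [SPN.eval, h i rfl]
  | sum t ht child w hw ih =>
    intro x y h
    simp only [SPN.eval]
    exact Finset.sum_congr rfl fun j _ => by rw [ih j x y h]
  | prod t scs hd child ih =>
    intro x y h
    simp only [SPN.eval]
    exact Finset.prod_congr rfl fun j _ =>
      ih j x y fun i hi => h i (Set.mem_iUnion.2 ⟨j, hi⟩)

/-- For every SPN `S` there is a configuration `x̃` such that
`S(x̃) · D(S) ≥ max_x S(x)`. -/
theorem stmt14 {ι : Type} [Fintype ι] [DecidableEq ι] {α : ι → Type}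
    [∀ i, Fintype (α i)] [∀ i, Nonempty (α i)]
    {sc : Set ι} (S : SPN ι α sc) :
    ∃ xt : ∀ i, α i, (⨆ x : ∀ i, α i, S.eval x) ≤ S.eval xt * (S.D : ℝ≥0) := by
  classical
  have bdd : ∀ (f : (∀ i, α i) → ℝ≥0), BddAbove (Set.range f) := fun f =>
    (Set.finite_range f).bddAbove
  induction S with
  | leaf i p =>
    obtain ⟨v, hv⟩ := Finite.exists_max p
    refine ⟨Function.update (Classical.arbitrary _) i v, ?_⟩
    simp only [SPN.eval, SPN.D, Nat.cast_one, mul_one, Function.update_self]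
    exact ciSup_le fun x => hv (x i)
  | sum t ht child w hw ih =>
    choose xt hxt using ih
    obtain ⟨j0, -, hj0⟩ := Finset.exists_max_image Finset.univ
      (fun j => w j * ((child j).eval (xt j) * ((child j).D : ℝ≥0)))
      ⟨⟨0, ht⟩, Finset.mem_univ _⟩
    refine ⟨xt j0, ?_⟩
    have h1 : (⨆ x : ∀ i, α i, (SPN.sum t ht child w hw).eval x) ≤
        ∑ j, w j * ((child j).eval (xt j) * ((child j).D : ℝ≥0)) := by
      refine ciSup_le fun x => ?_
      simp only [SPN.eval]
      refine Finset.sum_le_sum fun j _ => mul_le_mul_right ?_ _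
      exact le_trans (le_ciSup (bdd _) x) (hxt j)
    refine h1.trans ?_
    have h2 : ∑ j, w j * ((child j).eval (xt j) * ((child j).D : ℝ≥0)) ≤
        t * (w j0 * ((child j0).eval (xt j0) * ((child j0).D : ℝ≥0))) := by
      calc ∑ j, w j * ((child j).eval (xt j) * ((child j).D : ℝ≥0))
          ≤ ∑ _j : Fin t, w j0 * ((child j0).eval (xt j0) * ((child j0).D : ℝ≥0)) :=
            Finset.sum_le_sum fun j _ => hj0 j (Finset.mem_univ j)
        _ = t * (w j0 * ((child j0).eval (xt j0) * ((child j0).D : ℝ≥0))) := by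
            simp [Finset.sum_const, nsmul_eq_mul]
    refine h2.trans ?_
    have hD : ((child j0).D : ℝ≥0) ≤ ((∏ j, (child j).D : ℕ) : ℝ≥0) := by
      exact_mod_cast Finset.single_le_prod' (fun j _ => SPN.one_le_D (child j))
        (Finset.mem_univ j0)
    have heval : w j0 * (child j0).eval (xt j0) ≤ (SPN.sum t ht child w hw).eval (xt j0) := by
      simp only [SPN.eval]
      exact Finset.single_le_sum (f := fun j => w j * (child j).eval (xt j0))
        (fun j _ => zero_le) (Finset.mem_univ j0)
    calc (t : ℝ≥0) * (w j0 * ((child j0).eval (xt j0) * ((child j0).D : ℝ≥0)))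
        ≤ (t : ℝ≥0) * ((SPN.sum t ht child w hw).eval (xt j0) * ((∏ j, (child j).D : ℕ) : ℝ≥0)) := by
          refine mul_le_mul_right ?_ _
          rw [← mul_assoc]
          exact mul_le_mul' heval hD
      _ = (SPN.sum t ht child w hw).eval (xt j0) * (((SPN.sum t ht child w hw).D : ℕ) : ℝ≥0) := by
          simp only [SPN.D]
          push_cast
          ring
  | prod t scs hd child ih =>
    choose xt hxt using ih
    set x0 : ∀ i, α i := fun i =>
      if h : ∃ j, i ∈ scs j then xt h.choose i else Classical.arbitrary (α i) with hx0
    have hagree : ∀ j, (child j).eval x0 = (child j).eval (xt j) := by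
      intro j
      refine SPN.eval_congr (child j) x0 (xt j) fun i hi => ?_
      have hex : ∃ j', i ∈ scs j' := ⟨j, hi⟩
      have hch : hex.choose = j := by
        by_contra hne
        exact (hd hne).le_bot ⟨hex.choose_spec, hi⟩
      simp only [hx0, dif_pos hex, hch]
    refine ⟨x0, ?_⟩
    have h1 : (⨆ x : ∀ i, α i, (SPN.prod t scs hd child).eval x) ≤
        ∏ j, ((child j).eval (xt j) * ((child j).D : ℝ≥0)) := by
      refine ciSup_le fun x => ?_
      simp only [SPN.eval]
      refine Finset.prod_le_prod' fun j _ => ?_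
      exact le_trans (le_ciSup (bdd _) x) (hxt j)
    refine h1.trans (le_of_eq ?_)
    rw [Finset.prod_mul_distrib]
    simp only [SPN.eval, SPN.D]
    push_cast
    congr 1
    exact Finset.prod_congr rfl fun j _ => (hagree j).symm
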